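/- Let p, q, r be continuous on [t₁, t₂] (t₂ finite) with p > 0, and let φ be a solution of (pφ')' + qφ' + rφ = 0 on [t₁, t₂) with φ(t₁) ≠ 0 and such that y(t) = p(t)φ'(t)/φ(t) ≥ 0 on [t₁, t₂) and ∫_{t₁}^{t₂} y(τ)/p(τ) dτ < ∞. Then φ has a finite nonzero limit as t → t₂⁻ and φ' has a finite limit as t → t₂⁻, so φ extends as a solution beyond t₂. -/

import Mathlib

open Set MeasureTheory Filter Topology

/-- The primitive of a function integrable on `Ico a b` tends to the integral
over `Ico a b` as `t → b⁻`. -/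
lemma tendsto_primitive_aux {f : ℝ → ℝ} {a b : ℝ} (hab : a < b)
    (hf : MeasureTheory.IntegrableOn f (Set.Ico a b)) :
    Filter.Tendsto (fun t => ∫ s in a..t, f s) (nhdsWithin b (Set.Iio b))
      (nhds (∫ s in Set.Ico a b, f s)) := by
  have hf' : IntegrableOn f (Set.Icc a b) := by
    rwa [integrableOn_Icc_iff_integrableOn_Ico]
  have hcont : ContinuousOn (fun t => ∫ s in a..t, f s) (Set.Icc a b) := by
    have h := intervalIntegral.continuousOn_primitive_interval (a := a) (b := b)
      (μ := volume) (by rwa [Set.uIcc_of_le hab.le])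
    rwa [Set.uIcc_of_le hab.le] at h
  have hval : (∫ s in a..b, f s) = ∫ s in Set.Ico a b, f s := by
    rw [intervalIntegral.integral_of_le hab.le, MeasureTheory.integral_Ioc_eq_integral_Ioo,
      ← MeasureTheory.integral_Ico_eq_integral_Ioo]
  have h := (hcont b (Set.right_mem_Icc.2 hab.le)).tendsto
  rw [hval] at h
  rw [← nhdsWithin_Ico_eq_nhdsLT hab]
  exact h.mono_left (nhdsWithin_mono b Set.Ico_subset_Icc_self)

/-- FTC: right derivative of the primitive at points of `Ico a b`. -/
lemma primitive_hasDerivWithinAt_aux {f : ℝ → ℝ} {a b x : ℝ}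
    (hx : x ∈ Set.Ico a b) (hf : MeasureTheory.IntegrableOn f (Set.Ico a b))
    (hc : ContinuousOn f (Set.Ico a b)) :
    HasDerivWithinAt (fun t => ∫ s in a..t, f s) (f x) (Set.Ici x) x := by
  have hsub : Set.Ioc a x ⊆ Set.Ico a b := fun s hs => ⟨hs.1.le, lt_of_le_of_lt hs.2 hx.2⟩
  have hii : IntervalIntegrable f volume a x := by
    rw [intervalIntegrable_iff_integrableOn_Ioc_of_le hx.1]
    exact hf.mono_set hsub
  have hsub2 : Set.Ioo x b ⊆ Set.Ico a b := fun s hs => ⟨hx.1.trans hs.1.le, hs.2⟩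
  have hmem : Set.Ioo x b ∈ nhdsWithin x (Set.Ioi x) := by
    rw [← nhdsWithin_Ioo_eq_nhdsGT hx.2]; exact self_mem_nhdsWithin
  have hmeas : StronglyMeasurableAtFilter f (nhdsWithin x (Set.Ioi x)) :=
    ⟨Set.Ioo x b, hmem, ((hc.mono hsub2).aestronglyMeasurable measurableSet_Ioo)⟩
  have hcw : ContinuousWithinAt f (Set.Ioi x) x := by
    have hsub3 : Set.Ico x b ⊆ Set.Ico a b := Set.Ico_subset_Ico_left hx.1
    have h := (hc x hx).mono hsub3
    have h2 : ContinuousWithinAt f (Set.Ici x) x := by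
      rw [ContinuousWithinAt] at h ⊢
      rwa [← nhdsWithin_Ico_eq_nhdsGE hx.2]
    exact h2.mono Set.Ioi_subset_Ici_self
  exact intervalIntegral.integral_hasDerivWithinAt_right hii hmeas hcw

/-- If `φ` solves `(pφ')' + qφ' + rφ = 0` on `[t₁, t₂)` with `φ(t₁) ≠ 0`,
`y = pφ'/φ ≥ 0` and `∫_{t₁}^{t₂} y/p < ∞`, then `φ` has a finite nonzero
left limit at `t₂` and `φ'` has a finite left limit at `t₂`. -/
theorem stmt_4 (t₁ t₂ : ℝ) (ht : t₁ < t₂) (p q r φ φ' pφ'' : ℝ → ℝ)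
    (hp : ContinuousOn p (Set.Icc t₁ t₂))
    (hq : ContinuousOn q (Set.Icc t₁ t₂))
    (hr : ContinuousOn r (Set.Icc t₁ t₂))
    (hppos : ∀ t ∈ Set.Icc t₁ t₂, 0 < p t)
    (hφ : ∀ t ∈ Set.Ico t₁ t₂, HasDerivAt φ (φ' t) t)
    (hφ'c : ContinuousOn φ' (Set.Ico t₁ t₂))
    (hpφ : ∀ t ∈ Set.Ico t₁ t₂, HasDerivAt (fun s => p s * φ' s) (pφ'' t) t)
    (hode : ∀ t ∈ Set.Ico t₁ t₂, pφ'' t + q t * φ' t + r t * φ t = 0)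
    (hφ1 : φ t₁ ≠ 0)
    (hφne : ∀ t ∈ Set.Ico t₁ t₂, φ t ≠ 0)
    (hynn : ∀ t ∈ Set.Ico t₁ t₂, 0 ≤ p t * φ' t / φ t)
    (hint : MeasureTheory.IntegrableOn (fun τ => (p τ * φ' τ / φ τ) / p τ)
      (Set.Ico t₁ t₂)) :
    (∃ L : ℝ, L ≠ 0 ∧
        Filter.Tendsto φ (nhdsWithin t₂ (Set.Iio t₂)) (nhds L)) ∧
      (∃ L' : ℝ, Filter.Tendsto φ' (nhdsWithin t₂ (Set.Iio t₂)) (nhds L')) := by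
  have hIcoIcc : Set.Ico t₁ t₂ ⊆ Set.Icc t₁ t₂ := Set.Ico_subset_Icc_self
  set f : ℝ → ℝ := fun τ => φ' τ / φ τ with hf_def
  -- the given integrand equals f on the interval
  have hfeq : Set.EqOn (fun τ => (p τ * φ' τ / φ τ) / p τ) f (Set.Ico t₁ t₂) := by
    intro τ hτ
    have hpτ : p τ ≠ 0 := (hppos τ (hIcoIcc hτ)).ne'
    have hφτ : φ τ ≠ 0 := hφne τ hτ
    simp only [f]
    field_simp
  have hfint : IntegrableOn f (Set.Ico t₁ t₂) :=
    hint.congr_fun hfeq measurableSet_Ico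
  have hφc : ContinuousOn φ (Set.Ico t₁ t₂) := fun t htm =>
    (hφ t htm).continuousAt.continuousWithinAt
  have hfc : ContinuousOn f (Set.Ico t₁ t₂) := hφ'c.div hφc hφne
  set F : ℝ → ℝ := fun t => ∫ s in t₁..t, f s with hF_def
  -- key identity : φ t = φ t₁ * exp (F t) on [t₁, t₂)
  have key : ∀ b ∈ Set.Ico t₁ t₂, φ b * Real.exp (-F b) = φ t₁ := by
    intro b hb
    have hsub : Set.Icc t₁ b ⊆ Set.Ico t₁ t₂ := fun s hs =>
      ⟨hs.1, lt_of_le_of_lt hs.2 hb.2⟩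
    have derivf : ∀ x ∈ Set.Ico t₁ b,
        HasDerivWithinAt (fun t => φ t * Real.exp (-F t)) ((fun _ => (0:ℝ)) x)
          (Set.Ici x) x := by
      intro x hx
      have hx' : x ∈ Set.Ico t₁ t₂ := ⟨hx.1, hx.2.trans hb.2⟩
      have hF : HasDerivWithinAt F (f x) (Set.Ici x) x :=
        primitive_hasDerivWithinAt_aux hx' hfint hfc
      have h1 : HasDerivWithinAt (fun t => Real.exp (-F t))
          (Real.exp (-F x) * -f x) (Set.Ici x) x := hF.neg.exp
      have h2 : HasDerivWithinAt (fun t => φ t * Real.exp (-F t)) _ (Set.Ici x) x :=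
        ((hφ x hx').hasDerivWithinAt).mul h1
      convert h2 using 1
      have hφx : φ x ≠ 0 := hφne x hx'
      simp only [f]
      field_simp
      ring
    have derivg : ∀ x ∈ Set.Ico t₁ b,
        HasDerivWithinAt (fun _ : ℝ => φ t₁) ((fun _ => (0:ℝ)) x) (Set.Ici x) x :=
      fun x _ => hasDerivWithinAt_const x _ (φ t₁)
    have hFc : ContinuousOn F (Set.Icc t₁ b) := by
      have h := intervalIntegral.continuousOn_primitive_interval (a := t₁) (b := b)
        (μ := volume) (by rw [Set.uIcc_of_le hb.1]; exact hfint.mono_set hsub)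
      rwa [Set.uIcc_of_le hb.1] at h
    have fcont : ContinuousOn (fun t => φ t * Real.exp (-F t)) (Set.Icc t₁ b) :=
      (hφc.mono hsub).mul (Real.continuous_exp.comp_continuousOn hFc.neg)
    have hi : φ t₁ * Real.exp (-F t₁) = φ t₁ := by
      simp [F, intervalIntegral.integral_same]
    have := eq_of_has_deriv_right_eq derivf derivg fcont continuousOn_const hi b
      (Set.right_mem_Icc.2 hb.1)
    simpa using this
  have hφ_eq : ∀ b ∈ Set.Ico t₁ t₂, φ b = φ t₁ * Real.exp (F b) := by
    intro b hb
    have h := key b hb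
    have hex : Real.exp (F b) ≠ 0 := Real.exp_ne_zero _
    rw [Real.exp_neg] at h
    field_simp at h
    linarith
  -- limit of F
  have hFt : Filter.Tendsto F (nhdsWithin t₂ (Set.Iio t₂))
      (nhds (∫ s in Set.Ico t₁ t₂, f s)) := tendsto_primitive_aux ht hfint
  have hmemIco : Set.Ico t₁ t₂ ∈ nhdsWithin t₂ (Set.Iio t₂) := by
    rw [← nhdsWithin_Ico_eq_nhdsLT ht]; exact self_mem_nhdsWithin
  -- limit of φ
  set I : ℝ := ∫ s in Set.Ico t₁ t₂, f s with hI_def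
  have hφlim : Filter.Tendsto φ (nhdsWithin t₂ (Set.Iio t₂))
      (nhds (φ t₁ * Real.exp I)) := by
    have h1 : Filter.Tendsto (fun t => φ t₁ * Real.exp (F t))
        (nhdsWithin t₂ (Set.Iio t₂)) (nhds (φ t₁ * Real.exp I)) :=
      ((Real.continuous_exp.tendsto _).comp hFt).const_mul (φ t₁)
    exact h1.congr' (Filter.eventuallyEq_of_mem hmemIco fun b hb => (hφ_eq b hb).symm)
  -- boundedness of φ on the interval
  set Φ : ℝ → ℝ := fun t => φ t₁ * Real.exp (F t) with hΦ_def
  have hficc : IntegrableOn f (Set.Icc t₁ t₂) := by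
    rwa [integrableOn_Icc_iff_integrableOn_Ico]
  have hFcc : ContinuousOn F (Set.Icc t₁ t₂) := by
    have h := intervalIntegral.continuousOn_primitive_interval (a := t₁) (b := t₂)
      (μ := volume) (by rwa [Set.uIcc_of_le ht.le])
    rwa [Set.uIcc_of_le ht.le] at h
  have hΦc : ContinuousOn Φ (Set.Icc t₁ t₂) :=
    continuousOn_const.mul (Real.continuous_exp.comp_continuousOn hFcc)
  obtain ⟨M, hM⟩ := isCompact_Icc.exists_bound_of_continuousOn hΦc
  have hφbdd : ∀ t ∈ Set.Ico t₁ t₂, ‖φ t‖ ≤ M := by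
    intro t htm
    rw [hφ_eq t htm]
    exact hM t (hIcoIcc htm)
  have hΦm : AEStronglyMeasurable φ (volume.restrict (Set.Ico t₁ t₂)) :=
    hφc.aestronglyMeasurable measurableSet_Ico
  have hφbdd_ae : ∀ᵐ x ∂(volume.restrict (Set.Ico t₁ t₂)), ‖φ x‖ ≤ M :=
    (ae_restrict_iff' measurableSet_Ico).2 (Filter.Eventually.of_forall hφbdd)
  -- φ' is integrable on [t₁, t₂)
  have hφ'int : IntegrableOn φ' (Set.Ico t₁ t₂) := by
    have h1 : Integrable (fun τ => φ τ * f τ) (volume.restrict (Set.Ico t₁ t₂)) :=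
      hfint.bdd_mul hΦm hφbdd_ae
    refine (IntegrableOn.congr_fun h1 ?_ measurableSet_Ico)
    intro τ hτ
    have hφτ : φ τ ≠ 0 := hφne τ hτ
    simp only [f]
    field_simp
  -- integrability of g = -(qφ') - rφ
  set g : ℝ → ℝ := fun τ => -(q τ * φ' τ) - r τ * φ τ with hg_def
  obtain ⟨Cq, hCq⟩ := isCompact_Icc.exists_bound_of_continuousOn hq
  have hqm : AEStronglyMeasurable q (volume.restrict (Set.Ico t₁ t₂)) :=
    (hq.mono hIcoIcc).aestronglyMeasurable measurableSet_Ico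
  have hqbdd_ae : ∀ᵐ x ∂(volume.restrict (Set.Ico t₁ t₂)), ‖q x‖ ≤ Cq :=
    (ae_restrict_iff' measurableSet_Ico).2
      (Filter.Eventually.of_forall fun x hx => hCq x (hIcoIcc hx))
  have hqφ' : IntegrableOn (fun τ => q τ * φ' τ) (Set.Ico t₁ t₂) :=
    hφ'int.bdd_mul hqm hqbdd_ae
  have hrφ : IntegrableOn (fun τ => r τ * φ τ) (Set.Ico t₁ t₂) := by
    have h1 : IntegrableOn (fun τ => r τ * Φ τ) (Set.Icc t₁ t₂) :=
      (hr.mul hΦc).integrableOn_compact isCompact_Icc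
    refine IntegrableOn.congr_fun (h1.mono_set hIcoIcc) ?_ measurableSet_Ico
    intro τ hτ
    simp only [Φ]
    rw [← hφ_eq τ hτ]
  have hgint : IntegrableOn g (Set.Ico t₁ t₂) := hqφ'.neg.sub hrφ
  -- FTC2 for p φ'
  have hPeq : ∀ b ∈ Set.Ico t₁ t₂,
      p b * φ' b = p t₁ * φ' t₁ + ∫ s in t₁..b, g s := by
    intro b hb
    have hsub : Set.Icc t₁ b ⊆ Set.Ico t₁ t₂ := fun s hs =>
      ⟨hs.1, lt_of_le_of_lt hs.2 hb.2⟩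
    have hft : ∫ s in t₁..b, g s = p b * φ' b - p t₁ * φ' t₁ := by
      apply intervalIntegral.integral_eq_sub_of_hasDerivAt
      · intro x hx
        rw [Set.uIcc_of_le hb.1] at hx
        have hx' : x ∈ Set.Ico t₁ t₂ := hsub hx
        have he : g x = pφ'' x := by
          have := hode x hx'; simp only [g]; linarith
        rw [he]
        exact hpφ x hx'
      · refine IntegrableOn.intervalIntegrable ?_
        rw [Set.uIcc_of_le hb.1]
        exact hgint.mono_set hsub
    linarith
  -- limit of p φ'
  have hPlim : Filter.Tendsto (fun t => p t * φ' t) (nhdsWithin t₂ (Set.Iio t₂))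
      (nhds (p t₁ * φ' t₁ + ∫ s in Set.Ico t₁ t₂, g s)) := by
    have h1 := (tendsto_primitive_aux ht hgint).const_add (p t₁ * φ' t₁)
    exact h1.congr' (Filter.eventuallyEq_of_mem hmemIco fun b hb => (hPeq b hb).symm)
  -- limit of p
  have hplim : Filter.Tendsto p (nhdsWithin t₂ (Set.Iio t₂)) (nhds (p t₂)) := by
    have h := (hp t₂ (Set.right_mem_Icc.2 ht.le)).tendsto
    rw [← nhdsWithin_Ico_eq_nhdsLT ht]
    exact h.mono_left (nhdsWithin_mono t₂ hIcoIcc)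
  have hpt₂ : p t₂ ≠ 0 := (hppos t₂ (Set.right_mem_Icc.2 ht.le)).ne'
  constructor
  · exact ⟨φ t₁ * Real.exp I, mul_ne_zero hφ1 (Real.exp_ne_zero _), hφlim⟩
  · refine ⟨(p t₁ * φ' t₁ + ∫ s in Set.Ico t₁ t₂, g s) / p t₂, ?_⟩
    have h1 := hPlim.div hplim hpt₂
    refine h1.congr' (Filter.eventuallyEq_of_mem hmemIco fun b hb => ?_)
    have : p b ≠ 0 := (hppos b (hIcoIcc hb)).ne'
    simp only [Pi.div_apply]
    field_simp
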